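/- Minimax upper bound (oracle procedure): Fix δ∈(0,1) and let C_0 be the universal constant of the uniform Bernstein inequality for non-identically distributed samples. Let t* be a value of t∈[N+1] minimizing C_ρ·( 2^{10}·C_0^4·C_β·( d·log((1/d)·Σ_{s=1}^t n_(s)) + log(1/δ) ) / Σ_{s=1}^t n_(s) )^{1/((2−β)·ρ̄_t)}, and let ĥ_{Z^{(t*)}} be the ERM over the aggregated sample Z^{(t*)}. Then for any Π ∈ M(C_ρ, {ρ_t}_{t∈[N]}, {n_t}_{t∈[N+1]}, C_β, β), with probability at least 1−δ over Z ∼ Π, E_D(ĥ_{Z^{(t*)}}) ≤ min_{t∈[N+1]} C_ρ·( C·( d·log((1/d)·Σ_{s=1}^t n_(s)) + log(1/δ) ) / Σ_{s=1}^t n_(s) )^{1/((2−β)·ρ̄_t)}, where C = 2^{10}·C_0^4·C_β. -/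

import Mathlib

open MeasureTheory Finset

noncomputable section

namespace Paper

universe u

section Basic

variable {X : Type u} [MeasurableSpace X]

/-- 0-1 risk of a classifier under a distribution on `X × Bool`. -/
def risk (P : Measure (X × Bool)) (h : X → Bool) : ℝ :=
  (P {p | h p.1 ≠ p.2}).toReal

/-- Disagreement pseudo-distance `P(h ≠ h')` under the marginal. -/
def dis (P : Measure (X × Bool)) (h h' : X → Bool) : ℝ :=
  (P {p | h p.1 ≠ h' p.1}).toReal

/-- Excess risk over the best in class. -/
def excess (H : Set (X → Bool)) (P : Measure (X × Bool)) (h : X → Bool) : ℝ :=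
  risk P h - ⨅ h' : H, risk P (h' : X → Bool)

/-- `h` is a risk minimizer in `H` for `P`. -/
def IsOpt (H : Set (X → Bool)) (P : Measure (X × Bool)) (h : X → Bool) : Prop :=
  h ∈ H ∧ ∀ h' ∈ H, risk P h ≤ risk P h'

/-- Bernstein class condition with respect to a given minimizer. -/
def BernsteinAt (H : Set (X → Bool)) (P : Measure (X × Bool)) (hstar : X → Bool)
    (Cb β : ℝ) : Prop :=
  IsOpt H P hstar ∧ ∀ h ∈ H, dis P h hstar ≤ Cb * excess H P h ^ β

/-- Bernstein class condition with parameters `(Cb, β)`. -/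
def Bernstein (H : Set (X → Bool)) (P : Measure (X × Bool)) (Cb β : ℝ) : Prop :=
  ∃ hstar, BernsteinAt H P hstar Cb β

/-- `P` has transfer exponent `(Cr, ρ)` with respect to `D`. -/
def Transfer (H : Set (X → Bool)) (P D : Measure (X × Bool)) (Cr ρ : ℝ) : Prop :=
  ∀ h ∈ H, excess H D h ≤ Cr * excess H P h ^ (1 / ρ)

/-- `H` shatters the finite set `s`. -/
def Shatters (H : Set (X → Bool)) (s : Finset X) : Prop :=
  ∀ f : X → Bool, ∃ h ∈ H, ∀ x ∈ s, h x = f x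

/-- VC dimension of `H` is at most `d`. -/
def VCLE (H : Set (X → Bool)) (d : ℕ) : Prop :=
  ∀ s : Finset X, Shatters H s → s.card ≤ d

/-- VC dimension of `H` is exactly `d`. -/
def VCEq (H : Set (X → Bool)) (d : ℕ) : Prop :=
  VCLE H d ∧ ∃ s : Finset X, Shatters H s ∧ s.card = d

/-- The positive logarithm `log x = max (ln x) 1`. -/
def plog (x : ℝ) : ℝ := max (Real.log x) 1

/-- `ε(m, δ) = (d/m) log(m/d) + (1/m) log(1/δ)`. -/
def eps (d m : ℕ) (δ : ℝ) : ℝ :=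
  ((d : ℝ) / m) * plog ((m : ℝ) / d) + (1 / m) * plog (1 / δ)

/-- Empirical risk on a sample of size `m`. -/
def empRisk {m : ℕ} (S : Fin m → X × Bool) (h : X → Bool) : ℝ :=
  (∑ i, if h (S i).1 ≠ (S i).2 then (1 : ℝ) else 0) / m

/-- Excess empirical risk. -/
def empExcess {m : ℕ} (S : Fin m → X × Bool) (h h' : X → Bool) : ℝ :=
  empRisk S h - empRisk S h'

/-- Empirical disagreement pseudo-distance. -/
def empDis {m : ℕ} (S : Fin m → X × Bool) (h h' : X → Bool) : ℝ :=
  (∑ i, if h (S i).1 ≠ h' (S i).1 then (1 : ℝ) else 0) / m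

/-- `h` is an empirical risk minimizer over `H` for the sample `S`. -/
def IsERM (H : Set (X → Bool)) {m : ℕ} (S : Fin m → X × Bool) (h : X → Bool) : Prop :=
  h ∈ H ∧ ∀ h' ∈ H, empRisk S h ≤ empRisk S h'

end Basic

/-- The uniform Bernstein inequality (for VC classes and independent,
not necessarily identically distributed samples) holds with constant `C0`. -/
def UnifBernstein (C0 : ℝ) : Prop :=
  ∀ (Y : Type u) (_ : MeasurableSpace Y) (H : Set (Y → Bool)) (d : ℕ),
    VCEq H d →
    ∀ m : ℕ, 0 < m → ∀ δ : ℝ, 0 < δ → δ < 1 →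
    ∀ μ : Fin m → Measure (Y × Bool), (∀ i, IsProbabilityMeasure (μ i)) →
    ENNReal.ofReal (1 - δ) ≤
      Measure.pi μ {S : Fin m → Y × Bool | ∀ h ∈ H, ∀ h' ∈ H,
        ((∑ i, (risk (μ i) h - risk (μ i) h')) / m ≤
            empExcess S h h'
              + C0 * Real.sqrt
                  (min ((∑ i, dis (μ i) h h') / m) (empDis S h h') * eps d m δ)
              + C0 * eps d m δ)
        ∧ ((1 / 2) * ((∑ i, dis (μ i) h h') / m) - C0 * eps d m δ ≤ empDis S h h')
        ∧ (empDis S h h' ≤ 2 * ((∑ i, dis (μ i) h h') / m) + C0 * eps d m δ)}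

section Multi

variable {X : Type u} [MeasurableSpace X] {N : ℕ}

/-- The multisample distribution `Π = ∏_t P_t^{n_t}`. -/
def msM (P : Fin (N + 1) → Measure (X × Bool)) (n : Fin (N + 1) → ℕ) :
    Measure ((t : Fin (N + 1)) → Fin (n t) → X × Bool) :=
  Measure.pi fun t => Measure.pi fun _ => P t

/-- Membership in the multisource class `M(Cr, {ρ_t}, {n_t}, Cb, β)`:
(A1) a common optimal classifier, (A2) transfer exponents to the target
`D = P (Fin.last N)`, (A3) Bernstein class condition for every task. -/
def MemClass (H : Set (X → Bool)) (P : Fin (N + 1) → Measure (X × Bool))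
    (Cr : ℝ) (ρ : Fin (N + 1) → ℝ) (Cb β : ℝ) : Prop :=
  (∀ t, IsProbabilityMeasure (P t)) ∧
  (∃ hstar ∈ H, ∀ t, IsOpt H (P t) hstar) ∧
  (∀ t, Transfer H (P t) (P (Fin.last N)) Cr (ρ t)) ∧
  (∀ t, Bernstein H (P t) Cb β)

/-- Empirical risk over the aggregation of the datasets indexed by `T`. -/
def empRiskAgg {n : Fin (N + 1) → ℕ} (Z : (t : Fin (N + 1)) → Fin (n t) → X × Bool)
    (T : Finset (Fin (N + 1))) (h : X → Bool) : ℝ :=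
  (∑ t ∈ T, ∑ i, if h (Z t i).1 ≠ (Z t i).2 then (1 : ℝ) else 0) / (∑ t ∈ T, (n t : ℝ))

/-- Empirical disagreement over the aggregation of the datasets indexed by `T`. -/
def empDisAgg {n : Fin (N + 1) → ℕ} (Z : (t : Fin (N + 1)) → Fin (n t) → X × Bool)
    (T : Finset (Fin (N + 1))) (h h' : X → Bool) : ℝ :=
  (∑ t ∈ T, ∑ i, if h (Z t i).1 ≠ h' (Z t i).1 then (1 : ℝ) else 0) / (∑ t ∈ T, (n t : ℝ))

/-- `h` is an ERM over the aggregated sample `Z^T`. -/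
def IsERMAgg (H : Set (X → Bool)) {n : Fin (N + 1) → ℕ}
    (Z : (t : Fin (N + 1)) → Fin (n t) → X × Bool) (T : Finset (Fin (N + 1)))
    (h : X → Bool) : Prop :=
  h ∈ H ∧ ∀ h' ∈ H, empRiskAgg Z T h ≤ empRiskAgg Z T h'

/-- Partial sum of sample sizes along the sorted order (real valued). -/
def NtR (n : Fin (N + 1) → ℕ) (σp : Equiv.Perm (Fin (N + 1))) (t : Fin (N + 1)) : ℝ :=
  ∑ s ∈ Finset.Iic t, (n (σp s) : ℝ)

/-- Partial sum of sample sizes along the sorted order (natural number valued). -/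
def NtN (n : Fin (N + 1) → ℕ) (σp : Equiv.Perm (Fin (N + 1))) (t : Fin (N + 1)) : ℕ :=
  ∑ s ∈ Finset.Iic t, n (σp s)

/-- The average transfer exponent `ρ̄_t`. -/
def rhoBar (n : Fin (N + 1) → ℕ) (ρ : Fin (N + 1) → ℝ) (σp : Equiv.Perm (Fin (N + 1)))
    (t : Fin (N + 1)) : ℝ :=
  (∑ s ∈ Finset.Iic t, (n (σp s) : ℝ) * ρ (σp s)) / NtR n σp t

/-- `σp` sorts the transfer exponents in nondecreasing order:
`ρ_(1) ≤ ρ_(2) ≤ … ≤ ρ_(N+1)`. -/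
def SortedFor (ρ : Fin (N + 1) → ℝ) (σp : Equiv.Perm (Fin (N + 1))) : Prop :=
  ∀ i j : Fin (N + 1), i ≤ j → ρ (σp i) ≤ ρ (σp j)

/-- The oracle rate `Cr (Cc (d log(N_t/d) + log(1/δ)) / N_t)^{1/((2-β) ρ̄_t)}`. -/
def rateB (Cr Cc β : ℝ) (d : ℕ) (δ : ℝ) (n : Fin (N + 1) → ℕ) (ρ : Fin (N + 1) → ℝ)
    (σp : Equiv.Perm (Fin (N + 1))) (t : Fin (N + 1)) : ℝ :=
  Cr * (Cc * ((d : ℝ) * plog (NtR n σp t / d) + plog (1 / δ)) / NtR n σp t)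
      ^ (1 / ((2 - β) * rhoBar n ρ σp t))

/-- The minimax-lower-bound rate `(c₂ d / (N_t log² N_t))^{1/((2-β) ρ̄_t)}`. -/
def rateLow (β c2 : ℝ) (d : ℕ) (n : Fin (N + 1) → ℕ) (ρ : Fin (N + 1) → ℝ)
    (σp : Equiv.Perm (Fin (N + 1))) (t : Fin (N + 1)) : ℝ :=
  (c2 * d / (NtR n σp t * plog (NtR n σp t) ^ 2)) ^ (1 / ((2 - β) * rhoBar n ρ σp t))

end Multi

section TwoPoint

variable {X : Type u} [MeasurableSpace X]

/-- The distribution on `{x₀, x₁} × {±1}` with marginal mass `w` at `x₁`,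
regression value `η = P(Y = 1 | x₁)` and deterministic label `1` at `x₀`.
The label `+1` is encoded as `true` and `-1` as `false`. -/
def twoPt (x0 x1 : X) (w η : ℝ) : Measure (X × Bool) :=
  ENNReal.ofReal (w * η) • Measure.dirac (x1, true)
    + ENNReal.ofReal (w * (1 - η)) • Measure.dirac (x1, false)
    + ENNReal.ofReal (1 - w) • Measure.dirac (x0, true)

/-- The sign `±1` associated with `σ : Bool`. -/
def sgn (σ : Bool) : ℝ := if σ then 1 else -1

/-- `ε = (n N_P)^{-1/(2-β)}`. -/
def epsSrc (β : ℝ) (n NP : ℕ) : ℝ := ((n * NP : ℕ) : ℝ) ^ (-(1 / (2 - β)))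

/-- `ε₀ = 1 ∧ n_D^{-1/(2-β)}` (with the convention `1/0 = ∞`). -/
def epsTgt (β : ℝ) (nD : ℕ) : ℝ := (max 1 (nD : ℝ)) ^ (-(1 / (2 - β)))

/-- The target distribution `D_σ`. -/
def Dtgt (x0 x1 : X) (β c0 : ℝ) (nD : ℕ) (σ : Bool) : Measure (X × Bool) :=
  twoPt x0 x1 (epsTgt β nD ^ β / 2) (1 / 2 + sgn σ * c0 * epsTgt β nD ^ (1 - β))

/-- The noisy source distribution `P_σ`. -/
def Psrc (x0 x1 : X) (β c1 : ℝ) (n NP : ℕ) (σ : Bool) : Measure (X × Bool) :=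
  twoPt x0 x1 (c1 * epsSrc β n NP ^ β) (1 / 2 + sgn σ * epsSrc β n NP ^ (1 - β))

/-- The benign source distribution `Q_σ`. -/
def Qsrc (x0 x1 : X) (σ : Bool) : Measure (X × Bool) :=
  twoPt x0 x1 1 ((1 + sgn σ) / 2)

/-- The mixture distribution `α_P P_σ^n + α_Q Q_σ^n` of a source block. -/
def blockM (x0 x1 : X) (β c1 : ℝ) (n NP NQ : ℕ) (σ : Bool) :
    Measure (Fin n → X × Bool) :=
  ENNReal.ofReal ((NP : ℝ) / (NP + NQ)) • Measure.pi (fun _ => Psrc x0 x1 β c1 n NP σ)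
    + ENNReal.ofReal ((NQ : ℝ) / (NP + NQ)) • Measure.pi (fun _ => Qsrc x0 x1 σ)

/-- The target block distribution `D_σ^{n_D}`. -/
def tgtM (x0 x1 : X) (β c0 : ℝ) (nD : ℕ) (σ : Bool) : Measure (Fin nD → X × Bool) :=
  Measure.pi fun _ => Dtgt x0 x1 β c0 nD σ

/-- The joint distribution `Γ_σ = (α_P P_σ^n + α_Q Q_σ^n)^N × D_σ^{n_D}`. -/
def Gamma (x0 x1 : X) (β c0 c1 : ℝ) (n nD NP NQ : ℕ) (σ : Bool) :
    Measure ((Fin (NP + NQ) → Fin n → X × Bool) × (Fin nD → X × Bool)) :=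
  (Measure.pi fun _ : Fin (NP + NQ) => blockM x0 x1 β c1 n NP NQ σ).prod
    (tgtM x0 x1 β c0 nD σ)

/-- A single source block together with the latent indicator of the mixture
component (`true` for the `P_σ` component, `false` for the `Q_σ` component). -/
def blockJ (x0 x1 : X) (β c1 : ℝ) (n NP NQ : ℕ) (σ : Bool) :
    Measure (Bool × (Fin n → X × Bool)) :=
  ENNReal.ofReal ((NP : ℝ) / (NP + NQ)) •
      (Measure.dirac true).prod (Measure.pi fun _ => Psrc x0 x1 β c1 n NP σ)
    + ENNReal.ofReal ((NQ : ℝ) / (NP + NQ)) •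
      (Measure.dirac false).prod (Measure.pi fun _ => Qsrc x0 x1 σ)

/-- The joint distribution `Γ_σ`, augmented with the latent component
indicators of the mixture blocks. -/
def GammaJ (x0 x1 : X) (β c0 c1 : ℝ) (n nD NP NQ : ℕ) (σ : Bool) :
    Measure ((Fin (NP + NQ) → Bool × (Fin n → X × Bool)) × (Fin nD → X × Bool)) :=
  (Measure.pi fun _ : Fin (NP + NQ) => blockJ x0 x1 β c1 n NP NQ σ).prod
    (tgtM x0 x1 β c0 nD σ)

/-- `N̂_σ(Z)`: number of homogeneous blocks with all points at `x₁` and label `σ`. -/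
def NhatS (x1 : X) {Nn n : ℕ} (Zb : Fin Nn → Fin n → X × Bool) (σ : Bool) : ℕ :=
  ({t | ∀ i, Zb t i = (x1, σ)} : Set (Fin Nn)).ncard

/-- `n̂_σ(Z)`: total number of points at `x₁` with label `σ`. -/
def nhatS (x1 : X) {Nn n : ℕ} (Zb : Fin Nn → Fin n → X × Bool) (σ : Bool) : ℕ :=
  ({p : Fin Nn × Fin n | Zb p.1 p.2 = (x1, σ)}).ncard

/-- `ñ_σ(Z) = n̂_σ(Z) − n N̂_σ(Z)`: number of points at `x₁` with label `σ`
excluding homogeneous blocks. -/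
def ntildeS (x1 : X) {Nn n : ℕ} (Zb : Fin Nn → Fin n → X × Bool) (σ : Bool) : ℕ :=
  nhatS x1 Zb σ - n * NhatS x1 Zb σ

/-- `N̂_P(W)`: number of homogeneous blocks generated by the `P₋` component. -/
def NhatP (x1 : X) {Nn n : ℕ} (Wb : Fin Nn → Bool × (Fin n → X × Bool)) : ℕ :=
  ({t | (Wb t).1 = true ∧ ∃ b, ∀ i, (Wb t).2 i = (x1, b)} : Set (Fin Nn)).ncard

/-- `N̂_Q(W)`: number of homogeneous blocks generated by the `Q₋` component. -/
def NhatQ (x1 : X) {Nn n : ℕ} (Wb : Fin Nn → Bool × (Fin n → X × Bool)) : ℕ :=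
  ({t | (Wb t).1 = false ∧ ∃ b, ∀ i, (Wb t).2 i = (x1, b)} : Set (Fin Nn)).ncard

end TwoPoint

set_option maxHeartbeats 1000000
section AuxLemmas

variable {X : Type u} [MeasurableSpace X]

lemma risk_nonneg (P : Measure (X × Bool)) (h : X → Bool) : 0 ≤ risk P h :=
  ENNReal.toReal_nonneg

lemma risk_le_one (P : Measure (X × Bool)) [IsProbabilityMeasure P] (h : X → Bool) :
    risk P h ≤ 1 := by
  unfold risk
  have h1 : P {p | h p.1 ≠ p.2} ≤ 1 := prob_le_one
  have := ENNReal.toReal_mono (by simp) h1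
  simpa using this

lemma bddBelow_risk (H : Set (X → Bool)) (P : Measure (X × Bool)) :
    BddBelow (Set.range fun h' : H => risk P (h' : X → Bool)) :=
  ⟨0, by rintro y ⟨h', rfl⟩; exact ENNReal.toReal_nonneg⟩

lemma excess_nonneg {H : Set (X → Bool)} (P : Measure (X × Bool)) {h : X → Bool}
    (hh : h ∈ H) : 0 ≤ excess H P h := by
  have := ciInf_le (bddBelow_risk H P) (⟨h, hh⟩ : H)
  unfold excess
  exact sub_nonneg.mpr this

lemma iInf_risk_nonneg {H : Set (X → Bool)} (P : Measure (X × Bool)) :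
    0 ≤ ⨅ h' : H, risk P (h' : X → Bool) :=
  Real.iInf_nonneg fun _ => ENNReal.toReal_nonneg

lemma excess_le_one {H : Set (X → Bool)} (P : Measure (X × Bool)) [IsProbabilityMeasure P]
    (h : X → Bool) : excess H P h ≤ 1 := by
  have h1 := risk_le_one P h
  have h2 := iInf_risk_nonneg (H := H) P
  unfold excess
  linarith

lemma isOpt_iInf {H : Set (X → Bool)} {P : Measure (X × Bool)} {h : X → Bool}
    (hopt : IsOpt H P h) : (⨅ h' : H, risk P (h' : X → Bool)) = risk P h := by
  haveI : Nonempty H := ⟨⟨h, hopt.1⟩⟩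
  refine le_antisymm (ciInf_le (bddBelow_risk H P) (⟨h, hopt.1⟩ : H)) (le_ciInf ?_)
  rintro ⟨g, hg⟩
  exact hopt.2 g hg

lemma isOpt_excess_eq_zero {H : Set (X → Bool)} {P : Measure (X × Bool)} {h : X → Bool}
    (hopt : IsOpt H P h) : excess H P h = 0 := by
  unfold excess
  rw [isOpt_iInf hopt]
  ring

lemma risk_sub_opt {H : Set (X → Bool)} {P : Measure (X × Bool)} {hstar : X → Bool}
    (hopt : IsOpt H P hstar) (h : X → Bool) :
    risk P h - risk P hstar = excess H P h := by
  unfold excess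
  rw [isOpt_iInf hopt]

lemma dis_nonneg (P : Measure (X × Bool)) (f g : X → Bool) : 0 ≤ dis P f g :=
  ENNReal.toReal_nonneg

lemma dis_comm (P : Measure (X × Bool)) (f g : X → Bool) : dis P f g = dis P g f := by
  unfold dis
  congr 2
  ext p
  simp only [Set.mem_setOf_eq]
  exact ne_comm

lemma dis_triangle (P : Measure (X × Bool)) [IsFiniteMeasure P] (f g k : X → Bool) :
    dis P f k ≤ dis P f g + dis P g k := by
  unfold dis
  have hsub : {p : X × Bool | f p.1 ≠ k p.1} ⊆
      {p : X × Bool | f p.1 ≠ g p.1} ∪ {p : X × Bool | g p.1 ≠ k p.1} := by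
    intro p hp
    by_contra hc
    simp only [Set.mem_union, Set.mem_setOf_eq] at hc
    push_neg at hc
    exact hp (hc.1.trans hc.2)
  calc (P {p : X × Bool | f p.1 ≠ k p.1}).toReal
      ≤ (P ({p : X × Bool | f p.1 ≠ g p.1} ∪ {p : X × Bool | g p.1 ≠ k p.1})).toReal :=
        ENNReal.toReal_mono (measure_ne_top _ _) (measure_mono hsub)
    _ ≤ ((P {p : X × Bool | f p.1 ≠ g p.1}) + P {p : X × Bool | g p.1 ≠ k p.1}).toReal :=
        ENNReal.toReal_mono (ENNReal.add_ne_top.mpr ⟨measure_ne_top _ _, measure_ne_top _ _⟩)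
          (measure_union_le _ _)
    _ = _ := ENNReal.toReal_add (measure_ne_top _ _) (measure_ne_top _ _)

lemma one_le_plog (x : ℝ) : 1 ≤ plog x := le_max_right _ _

lemma plog_nonneg (x : ℝ) : 0 ≤ plog x := zero_le_one.trans (one_le_plog x)

lemma eps_nonneg (d m : ℕ) (δ : ℝ) : 0 ≤ eps d m δ :=
  add_nonneg (mul_nonneg (by positivity) (plog_nonneg _))
    (mul_nonneg (by positivity) (plog_nonneg _))

lemma sqrt_add_le' {x y : ℝ} (hx : 0 ≤ x) (hy : 0 ≤ y) :
    Real.sqrt (x + y) ≤ Real.sqrt x + Real.sqrt y := by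
  have h := Real.sqrt_le_sqrt (show x + y ≤ (Real.sqrt x + Real.sqrt y) ^ 2 by
    nlinarith [Real.sq_sqrt hx, Real.sq_sqrt hy, Real.sqrt_nonneg x, Real.sqrt_nonneg y])
  rwa [Real.sqrt_sq (by positivity)] at h

lemma le_of_sq_le_sq' {a b : ℝ} (ha : 0 ≤ a) (hb : 0 ≤ b) (h : a ^ 2 ≤ b ^ 2) : a ≤ b := by
  rw [← Real.sqrt_sq ha, ← Real.sqrt_sq hb]
  exact Real.sqrt_le_sqrt h

lemma jensen_rpow {ι : Type*} (T : Finset ι) (w E : ι → ℝ) {β : ℝ}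
    (hw : ∀ t ∈ T, 0 ≤ w t) (hE : ∀ t ∈ T, 0 ≤ E t) (hw1 : ∑ t ∈ T, w t = 1)
    (hβ0 : 0 ≤ β) (hβ1 : β ≤ 1) :
    ∑ t ∈ T, w t * E t ^ β ≤ (∑ t ∈ T, w t * E t) ^ β := by
  rcases eq_or_lt_of_le hβ0 with h0 | h0
  · simp only [← h0, Real.rpow_zero, mul_one, hw1]
    exact le_refl 1
  · have h1p : (1:ℝ) ≤ 1 / β := by rw [le_div_iff₀ h0]; linarith
    have h := Real.arith_mean_le_rpow_mean T w (fun t => E t ^ β) hw hw1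
      (fun t ht => Real.rpow_nonneg (hE t ht) β) h1p
    calc ∑ t ∈ T, w t * E t ^ β
        ≤ (∑ t ∈ T, w t * (E t ^ β) ^ (1/β)) ^ (1/(1/β)) := h
      _ = (∑ t ∈ T, w t * E t) ^ β := by
          rw [one_div_one_div]
          congr 1
          refine Finset.sum_congr rfl fun t ht => ?_
          rw [← Real.rpow_mul (hE t ht), mul_one_div_cancel h0.ne', Real.rpow_one]

lemma rpow_weighted_sum_le {ι : Type*} (T : Finset ι) (w r : ι → ℝ) {x : ℝ} (hx : 0 < x)
    (hw : ∀ t ∈ T, 0 ≤ w t) (hw1 : ∑ t ∈ T, w t = 1) :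
    x ^ (∑ t ∈ T, w t * r t) ≤ ∑ t ∈ T, w t * x ^ r t := by
  have hexp := convexOn_exp.map_sum_le (t := T) (w := w) (p := fun t => Real.log x * r t)
    hw hw1 (fun _ _ => Set.mem_univ _)
  rw [Real.rpow_def_of_pos hx]
  calc Real.exp (Real.log x * ∑ t ∈ T, w t * r t)
      = Real.exp (∑ t ∈ T, w t • (Real.log x * r t)) := by
        congr 1
        rw [Finset.mul_sum]
        exact Finset.sum_congr rfl fun t _ => by rw [smul_eq_mul]; ring
    _ ≤ ∑ t ∈ T, w t • Real.exp (Real.log x * r t) := hexp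
    _ = ∑ t ∈ T, w t * x ^ r t :=
        Finset.sum_congr rfl fun t _ => by rw [smul_eq_mul, Real.rpow_def_of_pos hx]

lemma solve_rate {C0 Cb β ε A : ℝ} (hC0 : 1/4 ≤ C0) (hCb : 2 ≤ Cb) (hβ0 : 0 ≤ β) (hβ1 : β ≤ 1)
    (hε : 0 ≤ ε) (hK1 : 2^10 * C0^4 * Cb * ε ≤ 1) (hA0 : 0 ≤ A)
    (hA : A ≤ C0 * Real.sqrt (Cb * (A ^ β + (0:ℝ) ^ β) * ε) + C0 * ε) :
    A ≤ (2^10 * C0^4 * Cb * ε) ^ (1/(2-β)) := by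
  have hC0' : (0:ℝ) < C0 := by linarith
  have hCb0 : (0:ℝ) < Cb := by linarith
  have h2β : (0:ℝ) < 2 - β := by linarith
  have h162 : (1:ℝ)/16 ≤ C0^2 := by nlinarith
  have h643 : (1:ℝ)/64 ≤ C0^3 := by nlinarith [h162]
  have h2564 : (1:ℝ)/256 ≤ C0^4 := by nlinarith [h162]
  rcases eq_or_lt_of_le hε with hε0 | hε0
  · have hA' : A = 0 := le_antisymm (by rw [← hε0] at hA; simpa using hA) hA0
    rw [hA']
    positivity
  have hz0 : (0:ℝ) ≤ (0:ℝ) ^ β := Real.rpow_nonneg le_rfl β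
  have hAβ : (0:ℝ) ≤ A ^ β := Real.rpow_nonneg hA0 β
  have hsqA : Real.sqrt (A ^ β) = A ^ (β/2) := by
    rw [Real.sqrt_eq_rpow, ← Real.rpow_mul hA0]
    congr 1
    ring
  have hsq : Real.sqrt (Cb * (A ^ β + (0:ℝ)^β) * ε)
      ≤ Real.sqrt (Cb * ε) * A ^ (β/2) + Real.sqrt (Cb * ε) * Real.sqrt ((0:ℝ) ^ β) := by
    have h1 : Cb * (A ^ β + (0:ℝ)^β) * ε = Cb * ε * A ^ β + Cb * ε * (0:ℝ)^β := by ring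
    rw [h1]
    refine (sqrt_add_le' (by positivity) (by positivity)).trans ?_
    rw [Real.sqrt_mul (by positivity : (0:ℝ) ≤ Cb * ε) (A ^ β),
      Real.sqrt_mul (by positivity : (0:ℝ) ≤ Cb * ε) ((0:ℝ) ^ β), hsqA]
  have hA2 : A ≤ C0 * Real.sqrt (Cb*ε) * A ^ (β/2)
      + (C0 * Real.sqrt (Cb*ε) * Real.sqrt ((0:ℝ)^β) + C0 * ε) := by
    have h2 := mul_le_mul_of_nonneg_left hsq hC0'.le
    linarith
  set s := Real.sqrt (Cb * ε) with hs_def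
  have hs0 : 0 ≤ s := Real.sqrt_nonneg _
  have hs2 : s ^ 2 = Cb * ε := Real.sq_sqrt (by positivity)
  rcases le_total (C0 * s * Real.sqrt ((0:ℝ)^β) + C0 * ε) (C0 * s * A ^ (β/2)) with hcase | hcase
  · have h2 : A ≤ 2 * (C0 * s) * A ^ (β/2) := by linarith
    rcases eq_or_lt_of_le hA0 with hA0' | hA0'
    · rw [← hA0']
      positivity
    · have hApow : (0:ℝ) < A ^ (β/2) := Real.rpow_pos_of_pos hA0' _
      have hpow : A ^ ((2-β)/2) ≤ 2 * (C0 * s) := by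
        have hr : A ^ ((2-β)/2) = A / A ^ (β/2) := by
          rw [eq_div_iff hApow.ne', ← Real.rpow_add hA0']
          rw [show (2-β)/2 + β/2 = 1 by ring, Real.rpow_one]
        rw [hr, div_le_iff₀ hApow]
        linarith
      have hrep : (A ^ ((2-β)/2)) ^ ((2:ℝ)/(2-β)) = A := by
        rw [← Real.rpow_mul hA0, show (2-β)/2 * (2/(2-β)) = 1 by field_simp, Real.rpow_one]
      have hstep : A ≤ (2*(C0*s)) ^ ((2:ℝ)/(2-β)) := by
        rw [← hrep]
        exact Real.rpow_le_rpow (Real.rpow_nonneg hA0 _) hpow (by positivity)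
      have hsqbase : (2*(C0*s)) ^ (2:ℝ) = 4 * C0^2 * (Cb*ε) := by
        rw [show (2:ℝ) = ((2:ℕ):ℝ) by norm_num, Real.rpow_natCast]
        calc (2*(C0*s))^2 = 4*C0^2*s^2 := by ring
          _ = 4*C0^2*(Cb*ε) := by rw [hs2]
      have hbase : (2*(C0*s)) ^ ((2:ℝ)/(2-β)) = (4 * C0^2 * (Cb*ε)) ^ ((1:ℝ)/(2-β)) := by
        rw [show (2:ℝ)/(2-β) = 2 * (1/(2-β)) by ring, Real.rpow_mul (by positivity), hsqbase]
      have hposq : (0:ℝ) ≤ C0^2*(Cb*ε) := by positivity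
      have h4 : 4*C0^2*(Cb*ε) ≤ 2^10*C0^4*Cb*ε := by
        linarith [mul_le_mul_of_nonneg_right h162 hposq,
          show (0:ℝ) ≤ C0^4*Cb*ε by positivity]
      calc A ≤ (2*(C0*s)) ^ ((2:ℝ)/(2-β)) := hstep
        _ = (4 * C0^2 * (Cb*ε)) ^ ((1:ℝ)/(2-β)) := hbase
        _ ≤ (2^10*C0^4*Cb*ε) ^ ((1:ℝ)/(2-β)) :=
            Real.rpow_le_rpow (by positivity) h4 (by positivity)
  · have h2 : A ≤ 2*(C0 * s * Real.sqrt ((0:ℝ)^β)) + 2*(C0*ε) := by linarith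
    rcases eq_or_ne β 0 with hb | hb
    · subst hb
      rw [Real.rpow_zero, Real.sqrt_one, mul_one] at h2
      rw [show (1:ℝ)/(2-0) = 1/2 by norm_num, ← Real.sqrt_eq_rpow]
      have hw0 : 0 ≤ Real.sqrt (2^10*C0^4*Cb*ε) := Real.sqrt_nonneg _
      have hw2 : (Real.sqrt (2^10*C0^4*Cb*ε))^2 = 2^10*C0^4*Cb*ε := Real.sq_sqrt (by positivity)
      have hv0 : 0 ≤ Real.sqrt ε := Real.sqrt_nonneg _
      have hv2 : (Real.sqrt ε)^2 = ε := Real.sq_sqrt hε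
      have hε8 : ε ≤ 1/8 := by
        linarith only [hK1, mul_le_mul_of_nonneg_right h2564 (show (0:ℝ) ≤ Cb*ε by positivity),
          mul_le_mul_of_nonneg_right hCb hε]
      have hv1 : Real.sqrt ε ≤ 1 := by
        refine le_of_sq_le_sq' hv0 zero_le_one ?_
        rw [hv2]
        linarith only [hε8]
      have hveps : ε ≤ Real.sqrt ε := by
        linarith only [mul_le_mul_of_nonneg_left hv1 hv0, hv2]
      have hvs : Real.sqrt ε ≤ s := by
        refine le_of_sq_le_sq' hv0 hs0 ?_
        rw [hv2, hs2]
        linarith only [mul_le_mul_of_nonneg_right (show (1:ℝ) ≤ Cb by linarith) hε]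
      have hposq : (0:ℝ) ≤ C0^2*(Cb*ε) := by positivity
      have h4C0s : 4*C0*s ≤ Real.sqrt (2^10*C0^4*Cb*ε) := by
        refine le_of_sq_le_sq' (by positivity) hw0 ?_
        rw [hw2]
        calc (4*C0*s)^2 = 16*C0^2*(Cb*ε) := by
              rw [show (4*C0*s)^2 = 16*C0^2*s^2 by ring, hs2]
          _ ≤ 2^10*C0^4*Cb*ε := by
              linarith only [mul_le_mul_of_nonneg_right h162 hposq,
                show (0:ℝ) ≤ C0^4*Cb*ε by positivity]
      have hfin : 2*(C0*s) + 2*(C0*ε) ≤ 4*C0*s := by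
        linarith only [mul_le_mul_of_nonneg_left (hveps.trans hvs) hC0'.le]
      linarith only [h2, hfin, h4C0s]
    · rw [Real.zero_rpow hb, Real.sqrt_zero, mul_zero, mul_zero, zero_add] at h2
      have hK0 : (0:ℝ) < 2^10*C0^4*Cb*ε := by positivity
      have hKK : 2*(C0*ε) ≤ 2^10*C0^4*Cb*ε := by
        linarith only [mul_le_mul_of_nonneg_right h643 (show (0:ℝ) ≤ C0*Cb*ε by positivity),
          mul_le_mul_of_nonneg_left hCb (show (0:ℝ) ≤ C0*ε by positivity),
          show (0:ℝ) ≤ C0^4*Cb*ε by positivity]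
      have hexp : (2^10*C0^4*Cb*ε) ^ (1:ℝ) ≤ (2^10*C0^4*Cb*ε) ^ (1/(2-β)) :=
        Real.rpow_le_rpow_of_exponent_ge hK0 hK1 (by rw [div_le_one h2β]; linarith)
      rw [Real.rpow_one] at hexp
      linarith

lemma nonempty_of_measure_pos {γ : Type*} [MeasurableSpace γ] (μ : Measure γ) {s : Set γ}
    {c : ENNReal} (hc : c ≠ 0) (h : c ≤ μ s) : s.Nonempty := by
  rcases Set.eq_empty_or_nonempty s with rfl | h'
  · rw [measure_empty] at h
    exact absurd (le_antisymm h zero_le) hc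
  · exact h'

lemma le_prod_fst {α β : Type*} [MeasurableSpace α] [MeasurableSpace β]
    (ν₁ : Measure α) (ν₂ : Measure β) [IsProbabilityMeasure ν₂] (B : Set α) :
    ν₁ B ≤ (ν₁.prod ν₂) (Prod.fst ⁻¹' B) := by
  rw [measure_eq_iInf (Prod.fst ⁻¹' B)]
  refine le_iInf fun C => le_iInf fun hsub => le_iInf fun hC => ?_
  rw [Measure.prod_apply hC]
  have hf : Measurable fun x => ν₂ (Prod.mk x ⁻¹' C) := measurable_measure_prodMk_left hC
  have hmem : ∀ x ∈ B, ν₂ (Prod.mk x ⁻¹' C) = 1 := by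
    intro x hx
    have h1 : Prod.mk x ⁻¹' C = Set.univ := by
      apply Set.eq_univ_of_forall
      intro y
      exact hsub (show (x, y) ∈ Prod.fst ⁻¹' B from hx)
    rw [h1, measure_univ]
  have hGm : MeasurableSet ((fun x => ν₂ (Prod.mk x ⁻¹' C)) ⁻¹' {1}) :=
    hf (measurableSet_singleton 1)
  calc ν₁ B ≤ ν₁ ((fun x => ν₂ (Prod.mk x ⁻¹' C)) ⁻¹' {1}) :=
        measure_mono fun x hx => hmem x hx
    _ = ∫⁻ x, ((fun x => ν₂ (Prod.mk x ⁻¹' C)) ⁻¹' {1}).indicator 1 x ∂ν₁ :=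
        (lintegral_indicator_one hGm).symm
    _ ≤ ∫⁻ x, ν₂ (Prod.mk x ⁻¹' C) ∂ν₁ := by
        refine lintegral_mono fun x => ?_
        by_cases hx : x ∈ (fun x => ν₂ (Prod.mk x ⁻¹' C)) ⁻¹' {1}
        · rw [Set.indicator_of_mem hx]
          exact le_of_eq (Set.mem_singleton_iff.mp hx).symm
        · rw [Set.indicator_of_notMem hx]
          exact zero_le

end AuxLemmas

section Quarter

lemma quarter_le_of_unifBernstein {C0 : ℝ} (hUB : UnifBernstein.{u} C0) : 1/4 ≤ C0 := by
  by_contra hlt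
  push_neg at hlt
  classical
  set coin : Measure (PUnit.{u+1} × Bool) :=
    (2⁻¹ : ENNReal) • Measure.dirac (PUnit.unit, true)
      + (2⁻¹ : ENNReal) • Measure.dirac (PUnit.unit, false) with hcoin_def
  have hcoin_apply : ∀ s : Set (PUnit.{u+1} × Bool),
      coin s = 2⁻¹ * s.indicator 1 (PUnit.unit, true)
        + 2⁻¹ * s.indicator 1 (PUnit.unit, false) := by
    intro s
    rw [hcoin_def]
    simp [Measure.add_apply, Measure.smul_apply, smul_eq_mul, Measure.dirac_apply]
  haveI hcoinP : IsProbabilityMeasure coin := by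
    constructor
    rw [hcoin_apply]
    simp only [Set.indicator_univ, Pi.one_apply, mul_one]
    exact ENNReal.inv_two_add_inv_two
  have hVC : VCEq (Set.univ : Set (PUnit.{u+1} → Bool)) 1 := by
    constructor
    · intro s _
      exact Finset.card_le_one.2 fun a _ b _ => Subsingleton.elim a b
    · exact ⟨{PUnit.unit}, fun f => ⟨f, Set.mem_univ f, fun x _ => rfl⟩, rfl⟩
  have hrisk : ∀ c : Bool, risk coin (fun _ => c) = 1/2 := by
    intro c
    unfold risk
    rw [hcoin_apply]
    cases c <;> simp [Set.indicator_apply, Set.mem_setOf_eq, ENNReal.toReal_inv] <;> norm_num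
  have hbd := hUB PUnit.{u+1} inferInstance Set.univ 1 hVC 1 one_pos (1/2) (by norm_num)
    (by norm_num) (fun _ => coin) (fun _ => hcoinP)
  obtain ⟨S, hS⟩ := nonempty_of_measure_pos _ (show ENNReal.ofReal (1 - 1/2) ≠ 0 by
    rw [ne_eq, ENNReal.ofReal_eq_zero]; norm_num) hbd
  set b : Bool := (S 0).2 with hb_def
  have hbne : b ≠ !b := by cases b <;> simp
  have hbne2 : (!b) ≠ b := Ne.symm hbne
  have hkey := (hS (fun _ => b) (Set.mem_univ _) (fun _ => !b) (Set.mem_univ _)).1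
  have hsum0 : ∑ i : Fin 1, (risk ((fun _ : Fin 1 => coin) i) (fun _ => b)
      - risk ((fun _ : Fin 1 => coin) i) (fun _ => !b)) = 0 := by
    rw [Fin.sum_univ_one, hrisk, hrisk]
    ring
  have hempR1 : empRisk S (fun _ => b) = 0 := by
    unfold empRisk
    rw [Fin.sum_univ_one, ← hb_def]
    simp
  have hempR2 : empRisk S (fun _ => !b) = 1 := by
    unfold empRisk
    rw [Fin.sum_univ_one, ← hb_def]
    simp [hbne2]
  have hdis1 : dis coin (fun _ => b) (fun _ => !b) = 1 := by
    simp [dis, hbne]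
  have hempDis : empDis S (fun _ => b) (fun _ => !b) = 1 := by
    simp [empDis, Fin.sum_univ_one, hbne]
  have he1 : plog 1 = 1 := by
    unfold plog
    rw [Real.log_one]
    exact max_eq_right zero_le_one
  have he2 : plog 2 = 1 := by
    unfold plog
    refine max_eq_right ?_
    have := Real.log_two_lt_d9
    linarith
  have heps : eps 1 1 (1/2) = 2 := by
    unfold eps
    rw [show ((1:ℕ):ℝ) = 1 by norm_num]
    rw [show (1:ℝ)/(1/2) = 2 by norm_num]
    rw [show (1:ℝ)/1 = 1 by norm_num]
    rw [he1, he2]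
    ring
  rw [hsum0] at hkey
  unfold empExcess at hkey
  rw [hempR1, hempR2] at hkey
  simp only [Fin.sum_univ_one] at hkey
  rw [hdis1, hempDis, heps] at hkey
  simp only [Nat.cast_one, zero_div, div_one, min_self, one_mul] at hkey
  -- hkey : 0 ≤ 0 - 1 + C0 * √2 + C0 * 2
  have hs2 : Real.sqrt 2 < 2 := by
    nlinarith [Real.sq_sqrt (show (0:ℝ) ≤ 2 by norm_num), Real.sqrt_nonneg 2]
  have hC0pos : 0 < Real.sqrt 2 + 2 := by positivity
  nlinarith [hkey, hs2, mul_lt_mul_of_pos_right hlt hC0pos]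

end Quarter

/-- Theorem: minimax upper bound by the oracle procedure.
Let `C₀` be the universal constant of the uniform Bernstein inequality and let
`t*` minimize `C_ρ (2¹⁰ C₀⁴ C_β (d log(N_t/d) + log(1/δ)) / N_t)^{1/((2-β) ρ̄_t)}`.
Then for any `Π ∈ M`, with probability at least `1 - δ` over `Z ∼ Π`, the ERM over
the aggregated sample `Z^{(t*)}` has target excess risk at most the minimum over
`t ∈ [N+1]` of that quantity. -/
theorem statement1 (C0 : ℝ) (hC0 : 0 < C0) (hUB : UnifBernstein.{u} C0) :
    ∀ (X : Type u) (_ : MeasurableSpace X) (H : Set (X → Bool)) (d : ℕ),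
      VCEq H d →
      ∀ (N : ℕ) (n : Fin (N + 1) → ℕ) (ρ : Fin (N + 1) → ℝ) (Cr Cb β : ℝ)
        (σp : Equiv.Perm (Fin (N + 1))) (δ : ℝ) (tstar : Fin (N + 1)),
        (∀ t : Fin (N + 1), (t : ℕ) < N → 1 ≤ n t) →
        (∀ t, 0 < ρ t) → ρ (Fin.last N) = 1 →
        2 ≤ Cr → 2 ≤ Cb → 0 ≤ β → β ≤ 1 →
        SortedFor ρ σp →
        0 < δ → δ < 1 →
        (∀ t : Fin (N + 1),
          rateB Cr (2 ^ 10 * C0 ^ 4 * Cb) β d δ n ρ σp tstar ≤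
            rateB Cr (2 ^ 10 * C0 ^ 4 * Cb) β d δ n ρ σp t) →
        ∀ P : Fin (N + 1) → Measure (X × Bool), MemClass H P Cr ρ Cb β →
          ENNReal.ofReal (1 - δ) ≤
            msM P n {Z | ∀ h, IsERMAgg H Z ((Finset.Iic tstar).image σp) h →
              excess H (P (Fin.last N)) h ≤
                ⨅ t : Fin (N + 1), rateB Cr (2 ^ 10 * C0 ^ 4 * Cb) β d δ n ρ σp t} := by
  classical
  intro X mX H d hVC N n ρ Cr Cb β σp δ tstar hn hρ hρlast hCr hCb hβ0 hβ1 hsort hδ0 hδ1 hmin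
    P hmem
  obtain ⟨hPprob, ⟨hstar, hstarH, hstarOpt⟩, htrans, hbern⟩ := hmem
  haveI hPP : ∀ t, IsProbabilityMeasure (P t) := hPprob
  haveI hPiP : ∀ t : Fin (N + 1), IsProbabilityMeasure (Measure.pi fun _ : Fin (n t) => P t) :=
    fun t => MeasureTheory.Measure.pi.instIsProbabilityMeasure _
  have hC04 : 1/4 ≤ C0 := quarter_le_of_unifBernstein hUB
  have h2β : (0:ℝ) < 2 - β := by linarith
  rcases le_or_gt 1 (rateB Cr (2 ^ 10 * C0 ^ 4 * Cb) β d δ n ρ σp tstar) with htriv | hrate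
  · -- trivial case: the rate is at least 1
    have huniv : {Z : (t : Fin (N+1)) → Fin (n t) → X × Bool |
        ∀ h, IsERMAgg H Z ((Finset.Iic tstar).image σp) h →
          excess H (P (Fin.last N)) h ≤
            ⨅ t : Fin (N + 1), rateB Cr (2 ^ 10 * C0 ^ 4 * Cb) β d δ n ρ σp t} = Set.univ := by
      apply Set.eq_univ_of_forall
      intro Z h hERM
      refine le_ciInf fun t => le_trans (le_trans ?_ htriv) (hmin t)
      exact excess_le_one (P (Fin.last N)) h
    rw [huniv]
    haveI : IsProbabilityMeasure (msM P n) := by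
      unfold msM
      exact MeasureTheory.Measure.pi.instIsProbabilityMeasure _
    rw [measure_univ]
    exact le_trans (ENNReal.ofReal_le_ofReal (by linarith)) (le_of_eq ENNReal.ofReal_one)
  · -- main case
    set T : Finset (Fin (N+1)) := (Finset.Iic tstar).image σp with hT
    set m := NtN n σp tstar with hm
    have hNtR : NtR n σp tstar = (m:ℝ) := by
      rw [hm]
      unfold NtR NtN
      push_cast
      rfl
    have hm0 : 0 < m := by
      by_contra h0
      push_neg at h0
      have hm00 : m = 0 := Nat.le_zero.mp h0
      have hr0 : NtR n σp tstar = 0 := by rw [hNtR, hm00]; simp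
      have hrB : rateB Cr (2 ^ 10 * C0 ^ 4 * Cb) β d δ n ρ σp tstar = Cr := by
        unfold rateB rhoBar
        rw [hr0]
        simp [div_zero, mul_zero, Real.rpow_zero]
      rw [hrB] at hrate
      linarith
    have hmR : (0:ℝ) < (m:ℝ) := Nat.cast_pos.mpr hm0
    -- positivity of the mean exponent
    have hrb0 : 0 < rhoBar n ρ σp tstar := by
      unfold rhoBar
      refine div_pos ?_ (by rw [hNtR]; exact hmR)
      have hex : ∃ s ∈ Finset.Iic tstar, n (σp s) ≠ 0 := by
        by_contra hall
        push_neg at hall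
        have : m = 0 := by
          rw [hm]
          unfold NtN
          exact Finset.sum_eq_zero hall
        omega
      obtain ⟨s0, hs0mem, hs0⟩ := hex
      have hterm : 0 < (n (σp s0) : ℝ) * ρ (σp s0) :=
        mul_pos (by exact_mod_cast Nat.pos_of_ne_zero hs0) (hρ _)
      exact lt_of_lt_of_le hterm
        (Finset.single_le_sum (f := fun s => (n (σp s) : ℝ) * ρ (σp s))
          (fun s _ => mul_nonneg (by positivity) (hρ _).le) hs0mem)
    have hexp0 : 0 < 1/((2-β) * rhoBar n ρ σp tstar) := by positivity
    set ε' := eps d m δ with hε'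
    have hε'0 : 0 ≤ ε' := eps_nonneg _ _ _
    have hKbase : 2 ^ 10 * C0 ^ 4 * Cb * (((d:ℝ)) * plog (NtR n σp tstar / (d:ℝ))
        + plog (1/δ)) / NtR n σp tstar = 2 ^ 10 * C0 ^ 4 * Cb * ε' := by
      rw [hNtR, hε']
      unfold eps
      field_simp
    have hrateK : rateB Cr (2 ^ 10 * C0 ^ 4 * Cb) β d δ n ρ σp tstar
        = Cr * (2 ^ 10 * C0 ^ 4 * Cb * ε') ^ (1/((2-β) * rhoBar n ρ σp tstar)) := by
      unfold rateB
      rw [hKbase]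
    have hK1 : 2 ^ 10 * C0 ^ 4 * Cb * ε' ≤ 1 := by
      by_contra hK
      push_neg at hK
      have h1 : (1:ℝ) ≤ (2 ^ 10 * C0 ^ 4 * Cb * ε') ^ (1/((2-β)*rhoBar n ρ σp tstar)) :=
        Real.one_le_rpow hK.le hexp0.le
      rw [hrateK] at hrate
      nlinarith [hrate, h1, hCr]
    -- aggregation setup
    have hTm : ∑ t ∈ T, n t = m := by
      rw [hT, hm]
      unfold NtN
      exact Finset.sum_image fun a _ b _ hab => σp.injective hab
    have hTmR : ∑ t ∈ T, (n t : ℝ) = (m:ℝ) := by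
      rw [← hTm]
      push_cast
      rfl
    have hcard : Fintype.card ((t : ↥T) × Fin (n ↑t)) = m := by
      rw [Fintype.card_sigma]
      simp only [Fintype.card_fin]
      rw [Finset.sum_coe_sort T n]
      exact hTm
    set e : Fin m ≃ (t : ↥T) × Fin (n ↑t) := (Fintype.equivFinOfCardEq hcard).symm with he
    set μ : Fin m → Measure (X × Bool) := fun i => P ↑(e i).1 with hμ
    haveI hμP : ∀ i, IsProbabilityMeasure (μ i) := fun i => hPP _
    have hUBa := hUB X mX H d hVC m hm0 δ hδ0 hδ1 μ hμP
    -- summation lemmas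
    have hsum2 : ∀ q : (t : Fin (N+1)) → Fin (n t) → ℝ,
        ∑ i : Fin m, q ↑(e i).1 (e i).2 = ∑ t ∈ T, ∑ j, q t j := by
      intro q
      rw [show (∑ i : Fin m, q ↑(e i).1 (e i).2)
          = ∑ p : (t : ↥T) × Fin (n ↑t), q ↑p.1 p.2 from
        Equiv.sum_comp e (fun p : (t : ↥T) × Fin (n ↑t) => q ↑p.1 p.2)]
      rw [← Finset.univ_sigma_univ, Finset.sum_sigma]
      exact Finset.sum_coe_sort T (fun t => ∑ j : Fin (n t), q t j)
    have hsum1 : ∀ f : Fin (N+1) → ℝ,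
        ∑ i : Fin m, f ↑(e i).1 = ∑ t ∈ T, (n t : ℝ) * f t := by
      intro f
      have h1 := hsum2 (fun t _ => f t)
      simpa [Finset.sum_const, Finset.card_univ, Fintype.card_fin, nsmul_eq_mul] using h1
    -- measure transport
    set ν₁ := Measure.pi (fun t : {x : Fin (N+1) // x ∈ T} =>
      Measure.pi fun _ : Fin (n ↑t) => P ↑t) with hν₁
    set ν₂ := Measure.pi (fun t : {x : Fin (N+1) // ¬ x ∈ T} =>
      Measure.pi fun _ : Fin (n ↑t) => P ↑t) with hν₂
    haveI : IsProbabilityMeasure ν₂ := by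
      rw [hν₂]
      exact MeasureTheory.Measure.pi.instIsProbabilityMeasure _
    set ψ := MeasurableEquiv.piEquivPiSubtypeProd
      (fun t : Fin (N+1) => Fin (n t) → X × Bool) (fun t => t ∈ T) with hψdef
    have hψ' : Measure.map (⇑ψ) (msM P n) = ν₁.prod ν₂ := by
      rw [hψdef, hν₁, hν₂]
      have h := (measurePreserving_piEquivPiSubtypeProd
        (fun t : Fin (N+1) => (Measure.pi fun _ : Fin (n t) => P t)) (fun t => t ∈ T)).map_eq
      convert h <;> first | rfl | exact Subsingleton.elim _ _
    have hψcoe : (⇑ψ : ((t : Fin (N+1)) → Fin (n t) → X × Bool) → _)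
        = fun f => (fun t : {x : Fin (N+1) // x ∈ T} => f ↑t,
            fun t : {x : Fin (N+1) // ¬ x ∈ T} => f ↑t) := by
      rw [hψdef]
      rfl
    set φ : ((t : ↥T) → Fin (n ↑t) → X × Bool) ≃ᵐ (Fin m → X × Bool) :=
      { toFun := fun g i => g (e i).1 (e i).2
        invFun := fun f t j => f (e.symm ⟨t, j⟩)
        left_inv := by
          intro g
          funext t j
          exact congrArg (fun p : (t : ↥T) × Fin (n ↑t) => g p.1 p.2)
            (e.apply_symm_apply ⟨t, j⟩)
        right_inv := by
          intro f
          funext i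
          show f (e.symm (e i)) = f i
          rw [Equiv.symm_apply_apply]
        measurable_toFun := measurable_pi_iff.mpr fun i =>
          (measurable_pi_apply (e i).2).comp (measurable_pi_apply (e i).1)
        measurable_invFun := measurable_pi_iff.mpr fun t => measurable_pi_iff.mpr fun j =>
          measurable_pi_apply _ } with hφdef
    have hφcoe : (⇑φ : ((t : ↥T) → Fin (n ↑t) → X × Bool) → (Fin m → X × Bool))
        = fun g i => g (e i).1 (e i).2 := by
      rw [hφdef]
      rfl
    have hφmap : Measure.map (φ : ((t : ↥T) → Fin (n ↑t) → X × Bool) → (Fin m → X × Bool)) ν₁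
        = Measure.pi μ := by
      refine (Measure.pi_eq fun s hs => ?_).symm
      rw [MeasurableEquiv.map_apply, hφcoe]
      have hpre : (fun (g : (t : ↥T) → Fin (n ↑t) → X × Bool) (i : Fin m) => g (e i).1 (e i).2) ⁻¹'
          (Set.pi Set.univ s)
          = Set.pi Set.univ (fun t : ↥T =>
              Set.pi Set.univ (fun j : Fin (n ↑t) => s (e.symm ⟨t, j⟩))) := by
        ext g
        simp only [Set.mem_preimage, Set.mem_univ_pi]
        constructor
        · intro hg t
          intro j
          have h0 : g (e (e.symm ⟨t, j⟩)).1 (e (e.symm ⟨t, j⟩)).2 ∈ s (e.symm ⟨t, j⟩) :=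
            hg (e.symm ⟨t, j⟩)
          have h1 : g (e (e.symm ⟨t, j⟩)).1 (e (e.symm ⟨t, j⟩)).2 = g t j := by
            have := congrArg (fun p : (t : ↥T) × Fin (n ↑t) => g p.1 p.2)
              (e.apply_symm_apply ⟨t, j⟩)
            simpa using this
          rw [← h1]
          exact h0
        · intro hg i
          have h0 : g (e i).1 (e i).2 ∈ s (e.symm (e i)) := by
            have h2 := hg (e i).1
            exact h2 (e i).2
          rwa [Equiv.symm_apply_apply] at h0
      rw [hν₁, hpre, Measure.pi_pi]
      have h1 : ∀ t : ↥T, (Measure.pi fun _ : Fin (n ↑t) => P ↑t)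
          (Set.pi Set.univ fun j : Fin (n ↑t) => s (e.symm ⟨t, j⟩))
          = ∏ j : Fin (n ↑t), P ↑t (s (e.symm ⟨t, j⟩)) := fun t => Measure.pi_pi _ _
      rw [Finset.prod_congr rfl (fun t _ => h1 t)]
      rw [show (∏ i : Fin m, μ i (s i))
          = ∏ p : (t : ↥T) × Fin (n ↑t), μ (e.symm p) (s (e.symm p)) from
        (Equiv.prod_comp e.symm (fun i => μ i (s i))).symm]
      rw [← Finset.univ_sigma_univ, Finset.prod_sigma]
      refine Finset.prod_congr rfl fun t _ => Finset.prod_congr rfl fun j _ => ?_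
      have h2 : P ↑(e (e.symm ⟨t, j⟩)).1 = P ↑t := by
        have := congrArg (fun p : (t : ↥T) × Fin (n ↑t) => (P ↑p.1 : Measure (X × Bool)))
          (e.apply_symm_apply ⟨t, j⟩)
        simpa using this
      simp only [hμ]
      rw [h2]
    have hchainGen : ∀ B : Set (Fin m → X × Bool),
        Measure.pi μ B ≤ msM P n ((fun Z (i : Fin m) => Z ↑(e i).1 (e i).2) ⁻¹' B) := by
      intro B
      calc Measure.pi μ B
          = Measure.map (φ : ((t : ↥T) → Fin (n ↑t) → X × Bool) → (Fin m → X × Bool)) ν₁ B := by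
            rw [hφmap]
        _ = ν₁ ((φ : ((t : ↥T) → Fin (n ↑t) → X × Bool) → (Fin m → X × Bool)) ⁻¹' B) :=
            MeasurableEquiv.map_apply φ B
        _ ≤ (ν₁.prod ν₂) (Prod.fst ⁻¹'
              ((φ : ((t : ↥T) → Fin (n ↑t) → X × Bool) → (Fin m → X × Bool)) ⁻¹' B)) :=
            le_prod_fst ν₁ ν₂ _
        _ = (Measure.map (ψ : _ → _) (msM P n)) (Prod.fst ⁻¹'
              ((φ : ((t : ↥T) → Fin (n ↑t) → X × Bool) → (Fin m → X × Bool)) ⁻¹' B)) := by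
            rw [hψ']
        _ = msM P n ((ψ : _ → _) ⁻¹' (Prod.fst ⁻¹'
              ((φ : ((t : ↥T) → Fin (n ↑t) → X × Bool) → (Fin m → X × Bool)) ⁻¹' B))) :=
            MeasurableEquiv.map_apply ψ _
        _ = msM P n ((fun Z (i : Fin m) => Z ↑(e i).1 (e i).2) ⁻¹' B) := by
            congr 1
    refine le_trans (le_trans hUBa (hchainGen _)) (measure_mono ?_)
    intro Z hZ
    intro h hERM
    have hhH : h ∈ H := hERM.1
    obtain ⟨hcl1, -, -⟩ := hZ h hhH hstar hstarH
    -- basic quantities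
    have hEt0 : ∀ t, 0 ≤ excess H (P t) h := fun t => excess_nonneg (P t) hhH
    have hw0 : ∀ t ∈ T, 0 ≤ (n t:ℝ)/(m:ℝ) := fun t _ => by positivity
    have hw1 : ∑ t ∈ T, (n t:ℝ)/(m:ℝ) = 1 := by
      rw [← Finset.sum_div, hTmR]
      exact div_self hmR.ne'
    -- risk sums
    have hrsum : (∑ i : Fin m, (risk (μ i) h - risk (μ i) hstar)) / (m:ℝ)
        = ∑ t ∈ T, ((n t:ℝ)/(m:ℝ)) * excess H (P t) h := by
      simp only [hμ]
      rw [hsum1 (fun t => risk (P t) h - risk (P t) hstar)]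
      rw [Finset.sum_div]
      refine Finset.sum_congr rfl fun t _ => ?_
      rw [risk_sub_opt (hstarOpt t) h]
      ring
    set A := ∑ t ∈ T, ((n t:ℝ)/(m:ℝ)) * excess H (P t) h with hA
    have hA0 : 0 ≤ A :=
      Finset.sum_nonneg fun t ht => mul_nonneg (hw0 t ht) (hEt0 t)
    -- empirical risks
    have hempR : ∀ g : X → Bool,
        empRisk (fun i : Fin m => Z ↑(e i).1 (e i).2) g = empRiskAgg Z T g := by
      intro g
      unfold empRisk empRiskAgg
      have h1 : (∑ i : Fin m,
          if g ((Z ↑(e i).1 (e i).2)).1 ≠ (Z ↑(e i).1 (e i).2).2 then (1:ℝ) else 0)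
          = ∑ t ∈ T, ∑ j, (if g ((Z t j)).1 ≠ (Z t j).2 then (1:ℝ) else 0) :=
        hsum2 (fun t j => if g ((Z t j)).1 ≠ (Z t j).2 then (1:ℝ) else 0)
      rw [h1, hTmR]
    have hee : empExcess (fun i : Fin m => Z ↑(e i).1 (e i).2) h hstar ≤ 0 := by
      unfold empExcess
      rw [hempR h, hempR hstar]
      have := hERM.2 hstar hstarH
      linarith
    -- disagreement sums
    have hdsum : (∑ i : Fin m, dis (μ i) h hstar)/(m:ℝ)
        = ∑ t ∈ T, ((n t:ℝ)/(m:ℝ)) * dis (P t) h hstar := by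
      simp only [hμ]
      rw [hsum1 (fun t => dis (P t) h hstar), Finset.sum_div]
      exact Finset.sum_congr rfl fun t _ => by ring
    have hdis_t : ∀ t ∈ T, dis (P t) h hstar ≤ Cb * (excess H (P t) h ^ β + (0:ℝ)^β) := by
      intro t _
      obtain ⟨g, gopt, gbd⟩ := hbern t
      haveI := hPP t
      have h1 : dis (P t) h hstar ≤ dis (P t) h g + dis (P t) g hstar := dis_triangle _ _ _ _
      have h4 : dis (P t) g hstar = dis (P t) hstar g := dis_comm _ _ _
      have h2 := gbd h hhH
      have h3 := gbd hstar hstarH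
      rw [isOpt_excess_eq_zero (hstarOpt t)] at h3
      linarith
    have hjensen : ∑ t ∈ T, ((n t:ℝ)/(m:ℝ)) * (excess H (P t) h) ^ β ≤ A ^ β :=
      jensen_rpow T _ _ hw0 (fun t _ => hEt0 t) hw1 hβ0 hβ1
    have hWle : ∑ t ∈ T, ((n t:ℝ)/(m:ℝ)) * dis (P t) h hstar ≤ Cb * (A ^ β + (0:ℝ)^β) := by
      have hstep : ∑ t ∈ T, ((n t:ℝ)/(m:ℝ)) * dis (P t) h hstar
          ≤ ∑ t ∈ T, ((n t:ℝ)/(m:ℝ)) * (Cb * (excess H (P t) h ^ β + (0:ℝ)^β)) :=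
        Finset.sum_le_sum fun t ht => mul_le_mul_of_nonneg_left (hdis_t t ht) (hw0 t ht)
      have hexpand : ∑ t ∈ T, ((n t:ℝ)/(m:ℝ)) * (Cb * (excess H (P t) h ^ β + (0:ℝ)^β))
          = Cb * (∑ t ∈ T, ((n t:ℝ)/(m:ℝ)) * excess H (P t) h ^ β)
            + Cb * (0:ℝ)^β * (∑ t ∈ T, (n t:ℝ)/(m:ℝ)) := by
        rw [Finset.mul_sum, Finset.mul_sum, ← Finset.sum_add_distrib]
        exact Finset.sum_congr rfl fun t _ => by ring
      rw [hexpand, hw1, mul_one] at hstep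
      have hcb0 : (0:ℝ) ≤ Cb := by linarith
      have h5 := mul_le_mul_of_nonneg_left hjensen hcb0
      calc ∑ t ∈ T, ((n t:ℝ)/(m:ℝ)) * dis (P t) h hstar
          ≤ Cb * (∑ t ∈ T, ((n t:ℝ)/(m:ℝ)) * excess H (P t) h ^ β) + Cb * (0:ℝ)^β := hstep
        _ ≤ Cb * A ^ β + Cb * (0:ℝ)^β := by linarith
        _ = Cb * (A ^ β + (0:ℝ)^β) := by ring
    -- combine with the uniform Bernstein event
    rw [hrsum] at hcl1
    rw [hdsum] at hcl1
    rw [← hε'] at hcl1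
    have hz0 : (0:ℝ) ≤ (0:ℝ)^β := Real.rpow_nonneg le_rfl _
    have hsqle : Real.sqrt (min (∑ t ∈ T, ((n t:ℝ)/(m:ℝ)) * dis (P t) h hstar)
          (empDis (fun i : Fin m => Z ↑(e i).1 (e i).2) h hstar) * ε')
        ≤ Real.sqrt (Cb * (A ^ β + (0:ℝ)^β) * ε') :=
      Real.sqrt_le_sqrt (mul_le_mul_of_nonneg_right ((min_le_left _ _).trans hWle) hε'0)
    have hC00 : (0:ℝ) ≤ C0 := by linarith
    have hA_ineq : A ≤ C0 * Real.sqrt (Cb * (A ^ β + (0:ℝ)^β) * ε') + C0 * ε' := by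
      have h6 := mul_le_mul_of_nonneg_left hsqle hC00
      linarith [hcl1, hee, h6]
    have hAK := solve_rate hC04 hCb hβ0 hβ1 hε'0 hK1 hA0 hA_ineq
    -- transfer to the target
    have hfinal : excess H (P (Fin.last N)) h
        ≤ rateB Cr (2 ^ 10 * C0 ^ 4 * Cb) β d δ n ρ σp tstar := by
      rcases eq_or_lt_of_le (excess_nonneg (P (Fin.last N)) hhH) with hED0 | hEDpos
      · rw [← hED0, hrateK]
        positivity
      · have hCr0 : (0:ℝ) < Cr := by linarith
        have hx0 : 0 < excess H (P (Fin.last N)) h / Cr := div_pos hEDpos hCr0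
        have hxle : ∀ t ∈ T, (excess H (P (Fin.last N)) h / Cr) ^ (ρ t) ≤ excess H (P t) h := by
          intro t _
          have h1 := htrans t h hhH
          have h2 : excess H (P (Fin.last N)) h / Cr ≤ excess H (P t) h ^ (1/ρ t) := by
            rw [div_le_iff₀ hCr0]
            linarith
          have h3 : (excess H (P (Fin.last N)) h / Cr) ^ ρ t
              ≤ (excess H (P t) h ^ (1/ρ t)) ^ ρ t :=
            Real.rpow_le_rpow hx0.le h2 (hρ t).le
          rwa [← Real.rpow_mul (hEt0 t), one_div_mul_cancel (hρ t).ne', Real.rpow_one] at h3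
        have hrb_eq : rhoBar n ρ σp tstar = ∑ t ∈ T, ((n t:ℝ)/(m:ℝ)) * ρ t := by
          unfold rhoBar
          rw [hNtR, hT]
          rw [show (∑ s ∈ Finset.Iic tstar, (n (σp s):ℝ) * ρ (σp s))
              = ∑ t ∈ (Finset.Iic tstar).image σp, (n t:ℝ) * ρ t from
            ((Finset.sum_image (fun a _ b _ hab => σp.injective hab) :
              (∑ t ∈ (Finset.Iic tstar).image σp, ((n t:ℝ) * ρ t))
                = ∑ s ∈ Finset.Iic tstar, (n (σp s):ℝ) * ρ (σp s))).symm]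
          rw [Finset.sum_div]
          exact Finset.sum_congr rfl fun t _ => by ring
        have hgeom : (excess H (P (Fin.last N)) h / Cr) ^ (rhoBar n ρ σp tstar) ≤ A := by
          rw [hrb_eq]
          calc (excess H (P (Fin.last N)) h / Cr) ^ (∑ t ∈ T, ((n t:ℝ)/(m:ℝ)) * ρ t)
              ≤ ∑ t ∈ T, ((n t:ℝ)/(m:ℝ)) * (excess H (P (Fin.last N)) h / Cr) ^ (ρ t) :=
                rpow_weighted_sum_le T _ ρ hx0 hw0 hw1
            _ ≤ ∑ t ∈ T, ((n t:ℝ)/(m:ℝ)) * excess H (P t) h :=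
                Finset.sum_le_sum fun t ht =>
                  mul_le_mul_of_nonneg_left (hxle t ht) (hw0 t ht)
        have hKnn : (0:ℝ) ≤ 2 ^ 10 * C0 ^ 4 * Cb * ε' := by positivity
        have h1 : (excess H (P (Fin.last N)) h / Cr) ^ (rhoBar n ρ σp tstar)
            ≤ (2 ^ 10 * C0 ^ 4 * Cb * ε') ^ (1/(2-β)) := hgeom.trans hAK
        have h2 := Real.rpow_le_rpow (Real.rpow_nonneg hx0.le _) h1
          (le_of_lt (by positivity : (0:ℝ) < 1/rhoBar n ρ σp tstar))
        rw [← Real.rpow_mul hx0.le, mul_one_div_cancel hrb0.ne', Real.rpow_one,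
          ← Real.rpow_mul hKnn,
          show (1/(2-β)) * (1/rhoBar n ρ σp tstar) = 1/((2-β)*rhoBar n ρ σp tstar) from
            one_div_mul_one_div _ _] at h2
        have h3 : excess H (P (Fin.last N)) h = Cr * (excess H (P (Fin.last N)) h / Cr) := by
          field_simp
        rw [h3, hrateK]
        exact mul_le_mul_of_nonneg_left h2 hCr0.le
    exact le_ciInf fun t => hfinal.trans (hmin t)

end Paper
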